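/- Define a(z,w) = (zw−1)(zw−2) and b(z,w) = (zw−1)z + (zw−2)z² on ℂ². There do not exist continuous functions c, d, g₁, g₂, g₃, g₄ : ℂ² → ℂ with a·d − b·c = 1 everywhere and L(g₁(x))·U(g₂(x))·L(g₃(x))·U(g₄(x)) = [[a(x), b(x)], [c(x), d(x)]] for all x ∈ ℂ². -/

import Mathlib

open Complex Set

lemma div_mem_slitPlane_of_close {u v : ℂ} (hv : v ≠ 0) (h : ‖u - v‖ < ‖v‖) :
    u / v ∈ Complex.slitPlane := by
  rw [Complex.mem_slitPlane_iff]
  left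
  have h1 : ‖u / v - 1‖ < 1 := by
    rw [show u / v - 1 = (u - v) / v by field_simp]
    rw [norm_div]
    rw [div_lt_one (norm_pos_iff.mpr hv)]
    exact h
  have h2 : (1 - u / v).re ≤ ‖1 - u / v‖ := Complex.re_le_norm _
  rw [norm_sub_rev] at h1
  have : (1 - u/v).re = 1 - (u/v).re := by simp
  linarith [this ▸ h2]

/-- Telescoping product. -/
lemma telescope_prod (f : ℕ → ℂ) (hne : ∀ k, f k ≠ 0) (j : ℕ) :
    ∏ k ∈ Finset.range j, f (k + 1) / f k = f j / f 0 := by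
  induction j with
  | zero => simp [div_self (hne 0)]
  | succ j ih =>
    rw [Finset.prod_range_succ, ih]
    rw [div_mul_div_comm, mul_comm (f 0) (f j), ← div_mul_div_comm, div_self (hne j), one_mul]

/-- Existence of a continuous logarithm along a segment. -/
lemma exists_cont_lift {f : ℝ → ℂ} (hf : Continuous f) (hne : ∀ t, f t ≠ 0)
    {a b : ℝ} (hab : a ≤ b) :
    ∃ L : ℝ → ℂ, Continuous L ∧ ∀ t ∈ Set.Icc a b, Complex.exp (L t) = f t := by
  -- minimum of ‖f‖ on [a,b]
  obtain ⟨t₀, ht₀, hmin⟩ := isCompact_Icc.exists_isMinOn (Set.nonempty_Icc.2 hab)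
    (hf.norm.continuousOn (s := Set.Icc a b))
  set m : ℝ := ‖f t₀‖ with hm_def
  have hm : 0 < m := norm_pos_iff.mpr (hne t₀)
  have hmle : ∀ t ∈ Set.Icc a b, m ≤ ‖f t‖ := fun t ht => hmin ht
  -- uniform continuity
  obtain ⟨δ, hδ, hunif⟩ := (Metric.uniformContinuousOn_iff.1
    (isCompact_Icc.uniformContinuousOn_of_continuous (hf.continuousOn (s := Set.Icc a b)))) m hm
  obtain ⟨n, hn⟩ := exists_nat_gt ((b - a) / δ)
  have hn0 : 0 < n := by
    by_contra h
    push_neg at h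
    interval_cases n
    have : 0 ≤ (b - a) / δ := div_nonneg (by linarith) hδ.le
    simp at hn
    linarith
  -- grid points
  set τ : ℕ → ℝ := fun k => a + k * ((b - a) / n) with hτ_def
  have hτ0 : τ 0 = a := by simp [hτ_def]
  have hτn : τ n = b := by
    have hn' : (n : ℝ) ≠ 0 := by exact_mod_cast hn0.ne'
    simp only [hτ_def]; rw [mul_div_cancel₀ _ hn']
    ring
  have hstep : ∀ k : ℕ, τ (k + 1) - τ k = (b - a) / n := by
    intro k
    simp only [hτ_def]
    push_cast
    ring
  have hstep_lt : (b - a) / n < δ := by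
    rw [div_lt_iff₀ (by exact_mod_cast hn0)]
    rw [div_lt_iff₀ hδ] at hn
    linarith [mul_comm (n : ℝ) δ ▸ hn]
  have hstep_nonneg : 0 ≤ (b - a) / n := div_nonneg (by linarith) (by positivity)
  have hτ_mono : Monotone τ := by
    intro k l hkl
    simp only [hτ_def]
    have : (k : ℝ) ≤ l := by exact_mod_cast hkl
    nlinarith
  have hτ_mem : ∀ k ≤ n, τ k ∈ Set.Icc a b := by
    intro k hk
    constructor
    · rw [← hτ0]; exact hτ_mono (Nat.zero_le k)
    · rw [← hτn]; exact hτ_mono hk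
  -- the clamp
  set clamp : ℕ → ℝ → ℝ := fun k t => max (τ k) (min t (τ (k + 1))) with hclamp_def
  have hclamp_mem : ∀ k t, clamp k t ∈ Set.Icc (τ k) (τ (k + 1)) := by
    intro k t
    have hkk : τ k ≤ τ (k + 1) := hτ_mono (Nat.le_succ k)
    constructor
    · exact le_max_left _ _
    · exact max_le hkk (min_le_right _ _)
  have hclamp_Icc : ∀ k, k < n → ∀ t, clamp k t ∈ Set.Icc a b := by
    intro k hk t
    have h1 := hclamp_mem k t
    have h2 := hτ_mem k hk.le
    have h3 := hτ_mem (k + 1) hk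
    exact ⟨le_trans h2.1 h1.1, le_trans h1.2 h3.2⟩
  -- slit plane condition
  have hslit : ∀ k, k < n → ∀ t, f (clamp k t) / f (τ k) ∈ Complex.slitPlane := by
    intro k hk t
    apply div_mem_slitPlane_of_close (hne _)
    have h1 : dist (f (clamp k t)) (f (τ k)) < m := by
      apply hunif _ (hclamp_Icc k hk t) _ (hτ_mem k hk.le)
      rw [Real.dist_eq]
      have h0 : (0:ℝ) ≤ clamp k t - τ k := by linarith [(hclamp_mem k t).1]
      rw [_root_.abs_of_nonneg h0]
      calc clamp k t - τ k ≤ τ (k + 1) - τ k := sub_le_sub_right (hclamp_mem k t).2 _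
        _ = (b - a) / n := hstep k
        _ < δ := hstep_lt
    calc ‖f (clamp k t) - f (τ k)‖ = dist (f (clamp k t)) (f (τ k)) := (dist_eq_norm _ _).symm
      _ < m := h1
      _ ≤ ‖f (τ k)‖ := hmle _ (hτ_mem k hk.le)
  -- define the lift
  refine ⟨fun t => Complex.log (f a) +
    ∑ k ∈ Finset.range n, Complex.log (f (clamp k t) / f (τ k)), ?_, ?_⟩
  · apply continuous_const.add
    apply continuous_finset_sum
    intro k hk
    have hk' := Finset.mem_range.1 hk
    have hgc : Continuous fun t => f (clamp k t) / f (τ k) := by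
      apply Continuous.div_const
      exact hf.comp (continuous_const.max (continuous_id.min continuous_const))
    exact hgc.clog fun t => hslit k hk' t
  · intro t ht
    -- find j
    have hP0 : τ 0 ≤ t := hτ0 ▸ ht.1
    set j := Nat.findGreatest (fun k => τ k ≤ t) (n - 1) with hj_def
    have hjle : j ≤ n - 1 := Nat.findGreatest_le _
    have hjn : j < n := lt_of_le_of_lt hjle (Nat.sub_lt hn0 one_pos)
    have hτjt : τ j ≤ t :=
      Nat.findGreatest_spec (P := fun k => τ k ≤ t) (Nat.zero_le _) hP0
    have htτj1 : t ≤ τ (j + 1) := by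
      rcases Nat.lt_or_ge j (n - 1) with h | h
      · by_contra hcon
        push_neg at hcon
        exact Nat.findGreatest_is_greatest (P := fun k => τ k ≤ t)
          (Nat.lt_succ_self j) (by omega) hcon.le
      · have : j = n - 1 := le_antisymm hjle h
        rw [this, Nat.sub_add_cancel hn0, hτn]
        exact ht.2
    -- compute
    rw [Complex.exp_add, Complex.exp_log (hne a), Complex.exp_sum]
    have hfac : ∀ k ∈ Finset.range n,
        Complex.exp (Complex.log (f (clamp k t) / f (τ k))) = f (clamp k t) / f (τ k) := by
      intro k hk
      exact Complex.exp_log (Complex.slitPlane_ne_zero (hslit k (Finset.mem_range.1 hk) t))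
    rw [Finset.prod_congr rfl hfac]
    have hsplit : ∏ k ∈ Finset.range n, f (clamp k t) / f (τ k)
        = (∏ k ∈ Finset.range (j + 1), f (clamp k t) / f (τ k))
          * ∏ k ∈ Finset.Ico (j + 1) n, f (clamp k t) / f (τ k) :=
      (Finset.prod_range_mul_prod_Ico _ hjn).symm
    have htail : ∏ k ∈ Finset.Ico (j + 1) n, f (clamp k t) / f (τ k) = 1 := by
      apply Finset.prod_eq_one
      intro k hk
      have hjk : j + 1 ≤ k := (Finset.mem_Ico.1 hk).1
      have h1 : t ≤ τ k := le_trans htτj1 (hτ_mono hjk)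
      have h2 : clamp k t = τ k := by
        simp only [hclamp_def]
        rw [min_eq_left (le_trans h1 (hτ_mono (Nat.le_succ k))), max_eq_left h1]
      rw [h2, div_self (hne _)]
    have hmid : clamp j t = t := by
      simp only [hclamp_def]
      rw [min_eq_left htτj1, max_eq_right hτjt]
    have hhead : ∀ k ∈ Finset.range j, f (clamp k t) / f (τ k) = f (τ (k + 1)) / f (τ k) := by
      intro k hk
      have hkj : k + 1 ≤ j := Finset.mem_range.1 hk
      have h1 : τ (k + 1) ≤ t := le_trans (hτ_mono hkj) hτjt
      have h2 : clamp k t = τ (k + 1) := by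
        simp only [hclamp_def]
        rw [min_eq_right h1, max_eq_right (hτ_mono (Nat.le_succ k))]
      rw [h2]
    rw [hsplit, htail, mul_one, Finset.prod_range_succ, hmid,
      Finset.prod_congr rfl hhead, telescope_prod (fun k => f (τ k)) (fun k => hne _) j]
    rw [hτ0]
    field_simp
    rw [mul_comm (f a * f (τ j)) (f t), mul_div_assoc,
      div_self (mul_ne_zero (hne a) (hne (τ j))), mul_one]

/-- A continuous function on an interval with values in `ℤ` (as reals) takes equal endpoint
values... more precisely, it's constant; we only need endpoints. -/
lemma int_valued_endpoints {T : ℝ} (hT : 0 ≤ T) {g : ℝ → ℝ}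
    (hg : ContinuousOn g (Set.Icc 0 T))
    (hint : ∀ t ∈ Set.Icc 0 T, ∃ n : ℤ, g t = n) : g T = g 0 := by
  by_contra hne
  obtain ⟨n0, hn0⟩ := hint 0 (Set.left_mem_Icc.2 hT)
  obtain ⟨nT, hnT⟩ := hint T (Set.right_mem_Icc.2 hT)
  have hnn : n0 ≠ nT := by
    rintro rfl
    exact hne (hnT.trans hn0.symm)
  set y : ℝ := ((min n0 nT : ℤ) : ℝ) + 1/2 with hy
  have hy_mem : y ∈ Set.uIcc (g 0) (g T) := by
    rw [Set.mem_uIcc]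
    rcases le_or_gt n0 nT with h | h
    · left
      have h2 : (n0 : ℝ) + 1 ≤ nT := by exact_mod_cast (by omega : n0 + 1 ≤ nT)
      have hmin : ((min n0 nT : ℤ) : ℝ) = n0 := by rw [min_eq_left h]
      constructor
      · rw [hn0, hy, hmin]; linarith
      · rw [hy, hmin, hnT]; linarith
    · right
      have h2 : (nT : ℝ) + 1 ≤ n0 := by exact_mod_cast (by omega : nT + 1 ≤ n0)
      have hmin : ((min n0 nT : ℤ) : ℝ) = nT := by rw [min_eq_right h.le]
      constructor
      · rw [hnT, hy, hmin]; linarith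
      · rw [hy, hmin, hn0]; linarith
  have huIcc : Set.uIcc (0:ℝ) T = Set.Icc 0 T := Set.uIcc_of_le hT
  obtain ⟨t, ht, hgt⟩ := intermediate_value_uIcc (a := (0:ℝ)) (b := T) (huIcc ▸ hg) hy_mem
  rw [huIcc] at ht
  obtain ⟨n, hn⟩ := hint t ht
  rw [hn] at hgt
  have hr : (n : ℝ) = ((min n0 nT : ℤ) : ℝ) + 1/2 := hy ▸ hgt
  have h2 : (2 * n : ℤ) = 2 * min n0 nT + 1 := by
    have hc : ((2 * n : ℤ) : ℝ) = ((2 * min n0 nT + 1 : ℤ) : ℝ) := by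
      push_cast at hr ⊢
      linarith
    exact_mod_cast hc
  omega

/-- Two continuous lifts of the same nonvanishing map over `[0,T]` have the same increment. -/
lemma lift_increment_eq {T : ℝ} (hT : 0 ≤ T) {L L' : ℝ → ℂ}
    (hL : ContinuousOn L (Set.Icc 0 T)) (hL' : ContinuousOn L' (Set.Icc 0 T))
    (h : ∀ t ∈ Set.Icc 0 T, Complex.exp (L t) = Complex.exp (L' t)) :
    L T - L 0 = L' T - L' 0 := by
  set g : ℝ → ℝ := fun t => ((L t - L' t) / (2 * Real.pi * Complex.I)).re with hg_def
  have hpi : (2 * (Real.pi : ℂ) * Complex.I) ≠ 0 := by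
    simp [Real.pi_ne_zero, Complex.I_ne_zero, Complex.ofReal_ne_zero]
  have hint : ∀ t ∈ Set.Icc 0 T, ∃ n : ℤ, (L t - L' t) = n * (2 * Real.pi * Complex.I) := by
    intro t ht
    have : Complex.exp (L t - L' t) = 1 := by
      rw [Complex.exp_sub, h t ht, div_self (Complex.exp_ne_zero _)]
    rw [Complex.exp_eq_one_iff] at this
    obtain ⟨n, hn⟩ := this
    exact ⟨n, hn.trans (by push_cast; ring)⟩
  have hgint : ∀ t ∈ Set.Icc 0 T, ∃ n : ℤ, g t = n := by
    intro t ht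
    obtain ⟨n, hn⟩ := hint t ht
    refine ⟨n, ?_⟩
    simp only [hg_def, hn]
    rw [mul_div_assoc, div_self hpi, mul_one, Complex.intCast_re]
  have hgc : ContinuousOn g (Set.Icc 0 T) :=
    (Complex.continuous_re.comp_continuousOn ((hL.sub hL').div_const _))
  have hend := int_valued_endpoints hT hgc hgint
  obtain ⟨nT, hnT⟩ := hint T (Set.right_mem_Icc.2 hT)
  obtain ⟨n0, hn0⟩ := hint 0 (Set.left_mem_Icc.2 hT)
  have hgT : g T = nT := by
    simp only [hg_def, hnT]
    rw [mul_div_assoc, div_self hpi, mul_one, Complex.intCast_re]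
  have hg0 : g 0 = n0 := by
    simp only [hg_def, hn0]
    rw [mul_div_assoc, div_self hpi, mul_one, Complex.intCast_re]
  have : (nT : ℝ) = n0 := by rw [← hgT, ← hg0, hend]
  have hnn : nT = n0 := by exact_mod_cast this
  have heq : L T - L' T = L 0 - L' 0 := by rw [hnT, hn0, hnn]
  linear_combination heq



/-- With `a(z,w) = (zw-1)(zw-2)` and `b(z,w) = (zw-1)z + (zw-2)z²`, there is no continuous
completion `[[a, b], [c, d]]` of determinant `1` admitting a continuous 4-factor
unitriangular factorization `L(g₁) U(g₂) L(g₃) U(g₄)`. -/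
theorem stmt17
    (a b : ℂ × ℂ → ℂ)
    (ha : ∀ x : ℂ × ℂ, a x = (x.1 * x.2 - 1) * (x.1 * x.2 - 2))
    (hb : ∀ x : ℂ × ℂ, b x = (x.1 * x.2 - 1) * x.1 + (x.1 * x.2 - 2) * x.1 ^ 2) :
    ¬ ∃ c d g₁ g₂ g₃ g₄ : ℂ × ℂ → ℂ,
      Continuous c ∧ Continuous d ∧
      Continuous g₁ ∧ Continuous g₂ ∧ Continuous g₃ ∧ Continuous g₄ ∧
      (∀ x : ℂ × ℂ, a x * d x - b x * c x = 1) ∧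
      (∀ x : ℂ × ℂ,
        !![1, 0; g₁ x, 1] * !![1, g₂ x; 0, 1] * !![1, 0; g₃ x, 1] * !![1, g₄ x; 0, 1]
          = !![a x, b x; c x, d x]) := by
  rintro ⟨c, d, g₁, g₂, g₃, g₄, hc, hd, h1c, h2c, h3c, h4c, hdet, hmat⟩
  -- entry equations
  have hent : ∀ x : ℂ × ℂ, 1 + g₂ x * g₃ x = a x ∧ (1 + g₂ x * g₃ x) * g₄ x + g₂ x = b x := by
    intro x
    have h := hmat x
    rw [← Matrix.ext_iff] at h
    have h00 := h 0 0
    have h01 := h 0 1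
    simp [Matrix.mul_apply, Fin.sum_univ_two] at h00 h01
    exact ⟨h00, h01⟩
  -- setup
  set σ : ℝ → ℝ := fun s => 1 + max 0 (min s 1) with hσ_def
  have hσc : Continuous σ :=
    continuous_const.add (continuous_const.max (continuous_id.min continuous_const))
  have hσ_mem : ∀ s, 1 ≤ σ s ∧ σ s ≤ 2 := by
    intro s
    constructor
    · simp [hσ_def, le_max_iff]
    · simp only [hσ_def]
      have : min s 1 ≤ 1 := min_le_right _ _
      have : max 0 (min s 1) ≤ 1 := max_le one_pos.le this
      linarith
  have hσ0 : σ 0 = 1 := by norm_num [hσ_def]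
  have hσ1 : σ 1 = 2 := by norm_num [hσ_def]
  set P : ℝ → ℝ → ℂ × ℂ := fun s θ =>
    (Complex.exp (θ * Complex.I), (σ s : ℂ) * Complex.exp (-(θ * Complex.I))) with hP_def
  have hPzw : ∀ s θ, (P s θ).1 * (P s θ).2 = ((σ s : ℝ) : ℂ) := by
    intro s θ
    simp only [hP_def]
    rw [mul_comm, mul_assoc, ← Complex.exp_add, neg_add_cancel, Complex.exp_zero, mul_one]
  set Φ : ℝ → ℝ → ℂ := fun s θ => g₂ (P s θ) with hΦ_def
  -- a at the points
  have haP : ∀ s θ, a (P s θ) = (((σ s : ℝ) : ℂ) - 1) * (((σ s : ℝ) : ℂ) - 2) := by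
    intro s θ
    rw [ha, hPzw]
  -- nonvanishing
  have hΦne : ∀ s θ, Φ s θ ≠ 0 := by
    intro s θ h0
    have h00 := (hent (P s θ)).1
    rw [haP] at h00
    simp only [hΦ_def] at h0
    rw [h0, zero_mul, add_zero] at h00
    have hre : (1 : ℝ) = (σ s - 1) * (σ s - 2) := by
      have := congrArg Complex.re h00
      push_cast at this
      simpa using this
    obtain ⟨hs1, hs2⟩ := hσ_mem s
    nlinarith
  -- continuity
  have hPc : Continuous (fun p : ℝ × ℝ => P p.1 p.2) := by
    apply Continuous.prodMk
    · exact Complex.continuous_exp.comp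
        ((Complex.continuous_ofReal.comp continuous_snd).mul continuous_const)
    · exact ((Complex.continuous_ofReal.comp (hσc.comp continuous_fst)).mul
        (Complex.continuous_exp.comp
          (((Complex.continuous_ofReal.comp continuous_snd).mul continuous_const).neg)))
  have hΦc : Continuous (fun p : ℝ × ℝ => Φ p.1 p.2) := h2c.comp hPc
  have hΦc1 : ∀ s, Continuous (fun θ : ℝ => Φ s θ) := by
    intro s
    simp only [hΦ_def, hP_def]
    apply h2c.comp
    apply Continuous.prodMk
    · exact Complex.continuous_exp.comp ((Complex.continuous_ofReal).mul continuous_const)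
    · exact continuous_const.mul (Complex.continuous_exp.comp
        (((Complex.continuous_ofReal).mul continuous_const).neg))
  -- periodicity at endpoints
  have hper : ∀ s, P s (2 * Real.pi) = P s 0 := by
    intro s
    have h2 : Complex.exp (((2 * Real.pi : ℝ) : ℂ) * Complex.I)
        = Complex.exp (((0 : ℝ) : ℂ) * Complex.I) := by
      push_cast
      simp [Complex.exp_two_pi_mul_I]
    have h3 : Complex.exp (-(((2 * Real.pi : ℝ) : ℂ) * Complex.I))
        = Complex.exp (-(((0 : ℝ) : ℂ) * Complex.I)) := by
      rw [Complex.exp_neg, Complex.exp_neg, h2]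
    simp only [hP_def, h2, h3]
  have hΦper : ∀ s, Φ s (2 * Real.pi) = Φ s 0 := fun s => by
    simp only [hΦ_def]; rw [hper]
  have h2π : (0 : ℝ) ≤ 2 * Real.pi := by positivity
  -- lifts
  have hlift : ∀ s : ℝ, ∃ L : ℝ → ℂ, Continuous L ∧
      ∀ θ ∈ Set.Icc 0 (2 * Real.pi), Complex.exp (L θ) = Φ s θ :=
    fun s => exists_cont_lift (hΦc1 s) (hΦne s) h2π
  choose L hLc hLe using hlift
  set W : ℝ → ℂ := fun s => L s (2 * Real.pi) - L s 0 with hW_def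
  -- local constancy
  have hWloc : ∀ s₀ : ℝ, ∀ᶠ s in nhds s₀, W s = W s₀ := by
    intro s₀
    -- min of ‖Φ s₀‖ on the circle
    obtain ⟨θ₀, hθ₀, hminon⟩ := isCompact_Icc.exists_isMinOn (Set.nonempty_Icc.2 h2π)
      ((hΦc1 s₀).norm.continuousOn (s := Set.Icc 0 (2 * Real.pi)))
    set m : ℝ := ‖Φ s₀ θ₀‖ with hm_def
    have hm : 0 < m := norm_pos_iff.mpr (hΦne s₀ θ₀)
    -- uniform continuity on a compact block
    have hK : IsCompact ((Set.Icc (s₀ - 1) (s₀ + 1)) ×ˢ (Set.Icc 0 (2 * Real.pi))) :=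
      isCompact_Icc.prod isCompact_Icc
    obtain ⟨δ, hδ, hunif⟩ := Metric.uniformContinuousOn_iff.1
      (hK.uniformContinuousOn_of_continuous (hΦc.continuousOn)) m hm
    rw [Metric.eventually_nhds_iff]
    refine ⟨min δ 1, lt_min hδ one_pos, ?_⟩
    intro s hs
    have hs1 : |s - s₀| < δ := lt_of_lt_of_le (Real.dist_eq _ _ ▸ hs) (min_le_left _ _)
    have hs2 : |s - s₀| ≤ 1 := le_of_lt (lt_of_lt_of_le (Real.dist_eq _ _ ▸ hs) (min_le_right _ _))
    have hsmem : s ∈ Set.Icc (s₀ - 1) (s₀ + 1) := by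
      rw [abs_le] at hs2
      constructor <;> linarith [hs2.1, hs2.2]
    have hs₀mem : s₀ ∈ Set.Icc (s₀ - 1) (s₀ + 1) := by
      constructor <;> linarith
    have hclose : ∀ θ ∈ Set.Icc (0:ℝ) (2 * Real.pi), ‖Φ s θ - Φ s₀ θ‖ < m := by
      intro θ hθ
      have := hunif (s, θ) (Set.mk_mem_prod hsmem hθ) (s₀, θ) (Set.mk_mem_prod hs₀mem hθ) ?_
      · rwa [dist_eq_norm] at this
      · rw [Prod.dist_eq]
        apply max_lt
        · rwa [Real.dist_eq]
        · simpa using hδ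
    -- modified lift
    set L' : ℝ → ℂ := fun θ => L s₀ θ + Complex.log (Φ s θ / Φ s₀ θ) with hL'_def
    have hslit : ∀ θ ∈ Set.Icc (0:ℝ) (2 * Real.pi), Φ s θ / Φ s₀ θ ∈ Complex.slitPlane := by
      intro θ hθ
      apply div_mem_slitPlane_of_close (hΦne s₀ θ)
      exact lt_of_lt_of_le (hclose θ hθ) (hminon hθ)
    have hL'c : ContinuousOn L' (Set.Icc 0 (2 * Real.pi)) := by
      apply ((hLc s₀).continuousOn).add
      intro θ hθ
      apply ContinuousAt.continuousWithinAt
      exact ContinuousAt.clog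
        (((hΦc1 s).continuousAt).div ((hΦc1 s₀).continuousAt) (hΦne s₀ θ)) (hslit θ hθ)
    have hL'e : ∀ θ ∈ Set.Icc (0:ℝ) (2 * Real.pi), Complex.exp (L' θ) = Φ s θ := by
      intro θ hθ
      simp only [hL'_def]
      rw [Complex.exp_add, hLe s₀ θ hθ,
        Complex.exp_log (div_ne_zero (hΦne s θ) (hΦne s₀ θ)),
        mul_comm, div_mul_cancel₀ _ (hΦne s₀ θ)]
    have hinc := lift_increment_eq h2π ((hLc s).continuousOn) hL'c
      (fun t ht => by rw [hLe s t ht, hL'e t ht])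
    have h0mem : (0:ℝ) ∈ Set.Icc (0:ℝ) (2 * Real.pi) := Set.left_mem_Icc.2 h2π
    have hTmem : (2 * Real.pi) ∈ Set.Icc (0:ℝ) (2 * Real.pi) := Set.right_mem_Icc.2 h2π
    simp only [hW_def]
    rw [hinc]
    simp only [hL'_def]
    rw [hΦper s, hΦper s₀]
    ring
  -- W is locally constant hence constant
  have hWconst : W 0 = W 1 := by
    have : IsLocallyConstant W := by
      rw [IsLocallyConstant.iff_eventually_eq]
      intro s₀
      exact hWloc s₀
    exact (this.apply_eq_of_preconnectedSpace 0 1).symm ▸ rfl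
  -- explicit values: g₂ = b on the zero sets of a
  have hg2b : ∀ s θ, a (P s θ) = 0 → Φ s θ = b (P s θ) := by
    intro s θ h0
    have h00 := (hent (P s θ)).1
    have h01 := (hent (P s θ)).2
    rw [h00, h0, zero_mul, zero_add] at h01
    exact h01
  -- W 0 = 4πi
  have hW0 : W 0 = 4 * Real.pi * Complex.I := by
    have ha0 : ∀ θ, a (P 0 θ) = 0 := by
      intro θ
      rw [haP, hσ0]
      norm_num
    have hΦ0 : ∀ θ, Φ 0 θ = -Complex.exp (θ * Complex.I) ^ 2 := by
      intro θ
      rw [hg2b 0 θ (ha0 θ), hb, hPzw, hσ0]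
      simp only [hP_def]
      push_cast
      ring
    set L₀ : ℝ → ℂ := fun θ => Real.pi * Complex.I + 2 * θ * Complex.I with hL₀_def
    have hL₀c : ContinuousOn L₀ (Set.Icc 0 (2 * Real.pi)) := by
      apply Continuous.continuousOn
      exact continuous_const.add ((continuous_const.mul
        (Complex.continuous_ofReal)).mul continuous_const)
    have hL₀e : ∀ θ ∈ Set.Icc (0:ℝ) (2 * Real.pi), Complex.exp (L₀ θ) = Φ 0 θ := by
      intro θ hθ
      rw [hΦ0]
      simp only [hL₀_def]
      rw [Complex.exp_add, Complex.exp_pi_mul_I]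
      rw [show (2 : ℂ) * θ * Complex.I = θ * Complex.I + θ * Complex.I by ring, Complex.exp_add]
      ring
    have := lift_increment_eq h2π ((hLc 0).continuousOn) hL₀c
      (fun t ht => by rw [hLe 0 t ht, hL₀e t ht])
    simp only [hW_def]
    rw [this]
    simp only [hL₀_def]
    push_cast
    ring
  -- W 1 = 2πi
  have hW1 : W 1 = 2 * Real.pi * Complex.I := by
    have ha1 : ∀ θ, a (P 1 θ) = 0 := by
      intro θ
      rw [haP, hσ1]
      norm_num
    have hΦ1 : ∀ θ, Φ 1 θ = Complex.exp (θ * Complex.I) := by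
      intro θ
      rw [hg2b 1 θ (ha1 θ), hb, hPzw, hσ1]
      simp only [hP_def]
      push_cast
      ring
    set L₁ : ℝ → ℂ := fun θ => θ * Complex.I with hL₁_def
    have hL₁c : ContinuousOn L₁ (Set.Icc 0 (2 * Real.pi)) :=
      ((Complex.continuous_ofReal).mul continuous_const).continuousOn
    have hL₁e : ∀ θ ∈ Set.Icc (0:ℝ) (2 * Real.pi), Complex.exp (L₁ θ) = Φ 1 θ := by
      intro θ hθ
      rw [hΦ1]
    have := lift_increment_eq h2π ((hLc 1).continuousOn) hL₁c
      (fun t ht => by rw [hLe 1 t ht, hL₁e t ht])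
    simp only [hW_def]
    rw [this]
    simp only [hL₁_def]
    push_cast
    ring
  rw [hW0, hW1] at hWconst
  have : (4 * Real.pi : ℝ) = 2 * Real.pi := by
    have := congrArg Complex.im hWconst
    simpa using this
  linarith [Real.pi_pos]
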